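/- Let H = (V, E) be a hypergraph, let k be a positive integer, let u : E → ℕ, and let d : E → ℝ with d(e) ≥ 0 for all e ∈ E. Let Q = { x ∈ ℝ^E : 0 ≤ x(e) ≤ u(e) for all e ∈ E, and x(δ(𝒫)) ≥ k(|𝒫| − 1) for every partition 𝒫 of V into nonempty parts }. If Q is nonempty, then there exists an integer-valued vector x* ∈ Q such that Σ_{e∈E} d(e)x*(e) ≤ Σ_{e∈E} d(e)x(e) for every x ∈ Q; that is, the reinforcement linear program min{ d·x : x ∈ Q } has an integer optimal solution. -/

import Mathlib

open Finset

variable {V α : Type*}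

/-- `F[X]`: the subfamily of hyperedges of `F` contained in `X`. -/
def restrict [DecidableEq V] (edge : α → Finset V) (F : Finset α) (X : Finset V) : Finset α :=
  F.filter fun e => edge e ⊆ X

/-- `F` is a hyperforest of the hypergraph `(V, E)` (with hyperedges given by `edge`). -/
def IsHyperforest [DecidableEq V] (edge : α → Finset V) (E F : Finset α) : Prop :=
  F ⊆ E ∧ ∀ X : Finset V, X.Nonempty → (restrict edge F X).card ≤ X.card - 1

/-- `F` is a hypertree: a hyperforest with `|V| - 1` hyperedges. -/
def IsHypertree [Fintype V] [DecidableEq V] (edge : α → Finset V) (E F : Finset α) : Prop :=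
  IsHyperforest edge E F ∧ F.card = Fintype.card V - 1

/-- `Ps` is a family of pairwise disjoint nonempty sets whose union is `S`. -/
def IsPartitionOf [DecidableEq V] (Ps : Finset (Finset V)) (S : Finset V) : Prop :=
  (∀ P ∈ Ps, P.Nonempty) ∧ (∀ P ∈ Ps, ∀ Q ∈ Ps, P ≠ Q → Disjoint P Q) ∧ Ps.sup id = S

/-- `Ps` is a partition of the vertex set `V` into nonempty parts. -/
def IsPartition [Fintype V] [DecidableEq V] (Ps : Finset (Finset V)) : Prop :=
  IsPartitionOf Ps Finset.univ

/-- `δ_F(Ps)`: hyperedges of `F` contained in the union of the members of `Ps`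
and intersecting at least two members of `Ps`. -/
def delta [DecidableEq V] (edge : α → Finset V) (F : Finset α) (Ps : Finset (Finset V)) :
    Finset α :=
  F.filter fun e => edge e ⊆ Ps.sup id ∧
    2 ≤ (Ps.filter fun P => (edge e ∩ P).Nonempty).card

/-- The feasible region of the reinforcement LP: `0 ≤ x(e) ≤ u(e)` for all `e ∈ E` and
`x(δ(Ps)) ≥ k(|Ps| - 1)` for every partition `Ps` of `V` into nonempty parts. -/
def reinforcementQ [Fintype V] [DecidableEq V] (edge : α → Finset V) (E : Finset α)
    (k : ℕ) (u : α → ℕ) : Set (α → ℝ) :=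
  {x | (∀ e ∈ E, 0 ≤ x e ∧ x e ≤ (u e : ℝ)) ∧
    ∀ Ps : Finset (Finset V), IsPartition Ps →
      (k : ℝ) * ((Ps.card : ℝ) - 1) ≤ ∑ e ∈ delta edge E Ps, x e}

/-! ## Auxiliary development -/

section Aux

open scoped Classical

/-- quasi-extreme point existence -/
lemma exists_quasi_extreme (L : List α) (O : Set (α → ℝ)) (hO : IsCompact O)
    (hne : O.Nonempty) :
    ∃ x ∈ O, ∀ y ∈ O, ∀ z ∈ O, (∀ e, x e = (y e + z e) / 2) → ∀ e ∈ L, y e = x e := by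
  induction L generalizing O with
  | nil =>
      obtain ⟨x, hx⟩ := hne
      exact ⟨x, hx, fun y _ z _ _ e he => absurd he List.not_mem_nil⟩
  | cons a L ih =>
      obtain ⟨x₀, hx₀, hmin⟩ := hO.exists_isMinOn hne (continuous_apply a).continuousOn
      have hO'c : IsCompact (O ∩ {x | x a = x₀ a}) :=
        hO.inter_right (isClosed_eq (continuous_apply a) continuous_const)
      obtain ⟨x, hxO', hprop⟩ := ih _ hO'c ⟨x₀, hx₀, rfl⟩
      refine ⟨x, hxO'.1, fun y hy z hz hmid e he => ?_⟩
      have hxa : x a = x₀ a := hxO'.2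
      have hya : x₀ a ≤ y a := isMinOn_iff.mp hmin y hy
      have hza : x₀ a ≤ z a := isMinOn_iff.mp hmin z hz
      have hmida := hmid a
      have hya' : y a = x a := by rw [hxa] at *; linarith
      have hza' : z a = x a := by rw [hxa] at *; linarith
      rcases List.mem_cons.mp he with rfl | heL
      · exact hya'
      · exact hprop y ⟨hy, show y a = x₀ a by rw [hya', hxa]⟩ z ⟨hz, show z a = x₀ a by rw [hza', hxa]⟩ hmid e heL

variable [Fintype V] [DecidableEq V]

lemma part_unique {Ps : Finset (Finset V)} {S : Finset V} (h : IsPartitionOf Ps S)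
    {A B : Finset V} (hA : A ∈ Ps) (hB : B ∈ Ps) {v : V} (hvA : v ∈ A) (hvB : v ∈ B) :
    A = B := by
  by_contra hne
  exact Finset.disjoint_left.mp (h.2.1 A hA B hB hne) hvA hvB

lemma exists_part {Ps : Finset (Finset V)} (h : IsPartitionOf Ps Finset.univ) (v : V) :
    ∃ A ∈ Ps, v ∈ A := by
  have : v ∈ Ps.sup id := by rw [h.2.2]; exact mem_univ v
  simpa using this

/-- `P` refines `R`. -/
def Refines (P R : Finset (Finset V)) : Prop := ∀ A ∈ P, ∃ B ∈ R, A ⊆ B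

lemma mem_delta_iff [DecidableEq α] {edge : α → Finset V} {E : Finset α}
    {Ps : Finset (Finset V)} (h : IsPartitionOf Ps Finset.univ) {e : α} :
    e ∈ delta edge E Ps ↔
      e ∈ E ∧ 2 ≤ (Ps.filter fun P => (edge e ∩ P).Nonempty).card := by
  simp [delta, h.2.2]

lemma delta_anti [DecidableEq α] {edge : α → Finset V} {E : Finset α}
    {P R : Finset (Finset V)} (hP : IsPartitionOf P Finset.univ)
    (hR : IsPartitionOf R Finset.univ) (href : Refines P R) :
    delta edge E R ⊆ delta edge E P := by
  intro e he
  rw [mem_delta_iff hR] at he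
  rw [mem_delta_iff hP]
  refine ⟨he.1, le_trans he.2 ?_⟩
  set g : Finset V → Finset V := fun B =>
    if h : (edge e ∩ B).Nonempty then (exists_part hP h.choose).choose else ∅ with hg
  have hgmem : ∀ B, ∀ hB : (edge e ∩ B).Nonempty, g B ∈ P ∧ hB.choose ∈ g B := by
    intro B hB
    rw [hg]
    simp only [dif_pos hB]
    exact ⟨(exists_part hP hB.choose).choose_spec.1, (exists_part hP hB.choose).choose_spec.2⟩
  apply Finset.card_le_card_of_injOn g
  · intro B hBf
    obtain ⟨hBR, hB⟩ := mem_filter.mp hBf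
    refine mem_filter.mpr ⟨(hgmem B hB).1, ⟨hB.choose, mem_inter.mpr
      ⟨(mem_inter.mp hB.choose_spec).1, (hgmem B hB).2⟩⟩⟩
  · intro B hBf B' hB'f hgeq
    simp only [coe_filter, Set.mem_setOf_eq] at hBf hB'f
    obtain ⟨hBR, hB⟩ := hBf
    obtain ⟨hB'R, hB'⟩ := hB'f
    have hsubB : g B ⊆ B := by
      obtain ⟨C, hC, hsub⟩ := href (g B) (hgmem B hB).1
      have : C = B := part_unique hR hC hBR (hsub (hgmem B hB).2) (mem_inter.mp hB.choose_spec).2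
      exact this ▸ hsub
    have hsubB' : g B' ⊆ B' := by
      obtain ⟨C, hC, hsub⟩ := href (g B') (hgmem B' hB').1
      have : C = B' := part_unique hR hC hB'R (hsub (hgmem B' hB').2)
        (mem_inter.mp hB'.choose_spec).2
      exact this ▸ hsub
    have hv : hB.choose ∈ B := (mem_inter.mp hB.choose_spec).2
    have hv' : hB.choose ∈ B' := hsubB' (hgeq ▸ (hgmem B hB).2)
    exact part_unique hR hBR hB'R hv hv'

/-- meet of two partitions -/
def meetP (P Q : Finset (Finset V)) : Finset (Finset V) :=
  P.biUnion fun A => ((Q.filter fun B => (A ∩ B).Nonempty).image fun B => A ∩ B)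

lemma mem_meetP {P Q : Finset (Finset V)} {C : Finset V} :
    C ∈ meetP P Q ↔ ∃ A ∈ P, ∃ B ∈ Q, (A ∩ B).Nonempty ∧ A ∩ B = C := by
  simp only [meetP, mem_biUnion, mem_image, mem_filter]
  tauto

lemma meetP_isPartition {P Q : Finset (Finset V)} (hP : IsPartitionOf P Finset.univ)
    (hQ : IsPartitionOf Q Finset.univ) : IsPartitionOf (meetP P Q) Finset.univ := by
  refine ⟨?_, ?_, ?_⟩
  · intro C hC
    obtain ⟨A, hA, B, hB, hne, hCe⟩ := mem_meetP.mp hC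
    exact hCe ▸ hne
  · intro C hC C' hC' hne
    obtain ⟨A, hA, B, hB, hn, rfl⟩ := mem_meetP.mp hC
    obtain ⟨A', hA', B', hB', hn', rfl⟩ := mem_meetP.mp hC'
    rw [Finset.disjoint_left]
    intro v hv hv'
    have h1 : A = A' := part_unique hP hA hA' (mem_inter.mp hv).1 (mem_inter.mp hv').1
    have h2 : B = B' := part_unique hQ hB hB' (mem_inter.mp hv).2 (mem_inter.mp hv').2
    exact hne (by rw [h1, h2])
  · rw [Finset.eq_univ_iff_forall]
    intro v
    rw [Finset.mem_sup]
    obtain ⟨A, hA, hvA⟩ := exists_part hP v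
    obtain ⟨B, hB, hvB⟩ := exists_part hQ v
    exact ⟨A ∩ B, mem_meetP.mpr ⟨A, hA, B, hB, ⟨v, mem_inter.mpr ⟨hvA, hvB⟩⟩, rfl⟩,
      mem_inter.mpr ⟨hvA, hvB⟩⟩

lemma refines_meetP_left {P Q : Finset (Finset V)} : Refines (meetP P Q) P := by
  intro C hC
  obtain ⟨A, hA, B, hB, hn, rfl⟩ := mem_meetP.mp hC
  exact ⟨A, hA, inter_subset_left⟩

lemma delta_meetP_subset [DecidableEq α] {edge : α → Finset V} {E : Finset α}
    (hE : ∀ e ∈ E, 2 ≤ (edge e).card) {P Q : Finset (Finset V)}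
    (hP : IsPartitionOf P Finset.univ) (hQ : IsPartitionOf Q Finset.univ) :
    delta edge E (meetP P Q) ⊆ delta edge E P ∪ delta edge E Q := by
  intro e he
  have hM := meetP_isPartition hP hQ
  have heE : e ∈ E := ((mem_delta_iff hM).mp he).1
  by_contra hcon
  rw [mem_union] at hcon
  push_neg at hcon
  have hnP : ¬ 2 ≤ (P.filter fun A => (edge e ∩ A).Nonempty).card := fun h =>
    hcon.1 ((mem_delta_iff hP).mpr ⟨heE, h⟩)
  have hnQ : ¬ 2 ≤ (Q.filter fun A => (edge e ∩ A).Nonempty).card := fun h =>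
    hcon.2 ((mem_delta_iff hQ).mpr ⟨heE, h⟩)
  have hedne : (edge e).Nonempty := Finset.card_pos.mp (by have := hE e heE; omega)
  have key : ∀ R : Finset (Finset V), IsPartitionOf R Finset.univ →
      ¬ 2 ≤ (R.filter fun A => (edge e ∩ A).Nonempty).card → ∃ A ∈ R, edge e ⊆ A := by
    intro R hR hcnt
    obtain ⟨v0, hv0⟩ := hedne
    obtain ⟨A, hA, hv0A⟩ := exists_part hR v0
    refine ⟨A, hA, fun w hw => ?_⟩
    obtain ⟨Aw, hAw, hwA⟩ := exists_part hR w
    have h1 : A ∈ R.filter fun A => (edge e ∩ A).Nonempty :=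
      mem_filter.mpr ⟨hA, ⟨v0, mem_inter.mpr ⟨hv0, hv0A⟩⟩⟩
    have h2 : Aw ∈ R.filter fun A => (edge e ∩ A).Nonempty :=
      mem_filter.mpr ⟨hAw, ⟨w, mem_inter.mpr ⟨hw, hwA⟩⟩⟩
    have : Aw = A := Finset.card_le_one.mp (by omega) _ h2 _ h1
    exact this ▸ hwA
  obtain ⟨A, hA, hsubA⟩ := key P hP hnP
  obtain ⟨B, hB, hsubB⟩ := key Q hQ hnQ
  have hcnt := ((mem_delta_iff hM).mp he).2
  have hsub : ((meetP P Q).filter fun C => (edge e ∩ C).Nonempty) ⊆ {A ∩ B} := by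
    intro C hC
    obtain ⟨hCm, v, hv⟩ := mem_filter.mp hC
    obtain ⟨A', hA', B', hB', hn', rfl⟩ := mem_meetP.mp hCm
    have hv1 : v ∈ edge e := (mem_inter.mp hv).1
    have hv2 : v ∈ A' := (mem_inter.mp (mem_inter.mp hv).2).1
    have hv3 : v ∈ B' := (mem_inter.mp (mem_inter.mp hv).2).2
    have e1 : A' = A := part_unique hP hA' hA hv2 (hsubA hv1)
    have e2 : B' = B := part_unique hQ hB' hB hv3 (hsubB hv1)
    rw [mem_singleton, e1, e2]
  have hle := Finset.card_le_card hsub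
  rw [Finset.card_singleton] at hle
  omega

/-- join relation -/
def JoinRel (P Q : Finset (Finset V)) : V → V → Prop :=
  Relation.EqvGen fun v w => ∃ C ∈ P ∪ Q, v ∈ C ∧ w ∈ C

/-- join of two partitions -/
noncomputable def joinP (P Q : Finset (Finset V)) : Finset (Finset V) :=
  Finset.univ.image fun v => Finset.univ.filter fun w => JoinRel P Q v w

lemma joinP_isPartition {P Q : Finset (Finset V)} :
    IsPartitionOf (joinP P Q) Finset.univ := by
  refine ⟨?_, ?_, ?_⟩
  · intro C hC
    obtain ⟨v, -, rfl⟩ := mem_image.mp hC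
    exact ⟨v, mem_filter.mpr ⟨mem_univ _, .refl v⟩⟩
  · intro C hC C' hC' hne
    obtain ⟨v, -, rfl⟩ := mem_image.mp hC
    obtain ⟨w, -, rfl⟩ := mem_image.mp hC'
    rw [Finset.disjoint_left]
    intro z hz hz'
    have h1 : JoinRel P Q v z := (mem_filter.mp hz).2
    have h2 : JoinRel P Q w z := (mem_filter.mp hz').2
    apply hne
    ext y
    simp only [mem_filter, mem_univ, true_and]
    constructor
    · intro h; exact .trans _ _ _ (.trans _ _ _ h2 (.symm _ _ h1)) h
    · intro h; exact .trans _ _ _ (.trans _ _ _ h1 (.symm _ _ h2)) h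
  · rw [Finset.eq_univ_iff_forall]
    intro v
    rw [Finset.mem_sup]
    refine ⟨_, mem_image.mpr ⟨v, mem_univ _, rfl⟩, ?_⟩
    show v ∈ Finset.univ.filter fun w => JoinRel P Q v w
    exact mem_filter.mpr ⟨mem_univ _, .refl v⟩

lemma refines_joinP_left {P Q : Finset (Finset V)} (hP : IsPartitionOf P Finset.univ) :
    Refines P (joinP P Q) := by
  intro A hA
  obtain ⟨v, hv⟩ := hP.1 A hA
  refine ⟨Finset.univ.filter fun w => JoinRel P Q v w, mem_image.mpr ⟨v, mem_univ _, rfl⟩, ?_⟩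
  intro w hw
  exact mem_filter.mpr ⟨mem_univ _, .rel _ _ ⟨A, mem_union_left _ hA, hv, hw⟩⟩

lemma refines_joinP_right {P Q : Finset (Finset V)} (hQ : IsPartitionOf Q Finset.univ) :
    Refines Q (joinP P Q) := by
  intro A hA
  obtain ⟨v, hv⟩ := hQ.1 A hA
  refine ⟨Finset.univ.filter fun w => JoinRel P Q v w, mem_image.mpr ⟨v, mem_univ _, rfl⟩, ?_⟩
  intro w hw
  exact mem_filter.mpr ⟨mem_univ _, .rel _ _ ⟨A, mem_union_right _ hA, hv, hw⟩⟩

lemma union_not_mem {P : Finset (Finset V)} (hP : IsPartitionOf P Finset.univ)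
    {A1 A2 : Finset V} (h1 : A1 ∈ P) (h2 : A2 ∈ P) (h12 : A1 ≠ A2) : A1 ∪ A2 ∉ P := by
  intro hmem
  obtain ⟨v1, hv1⟩ := hP.1 A1 h1
  have he : A1 ∪ A2 = A1 := part_unique hP hmem h1 (mem_union_left _ hv1) hv1
  obtain ⟨v2, hv2⟩ := hP.1 A2 h2
  have hv2' : v2 ∈ A1 := he ▸ (mem_union_right A1 hv2)
  exact Finset.disjoint_left.mp (hP.2.1 A1 h1 A2 h2 h12) hv2' hv2

lemma merge_isPartition {P : Finset (Finset V)} (hP : IsPartitionOf P Finset.univ)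
    {A1 A2 : Finset V} (h1 : A1 ∈ P) (h2 : A2 ∈ P) (h12 : A1 ≠ A2) :
    IsPartitionOf (insert (A1 ∪ A2) ((P.erase A1).erase A2)) Finset.univ := by
  have hmemE : ∀ {D : Finset V}, D ∈ (P.erase A1).erase A2 → D ∈ P ∧ D ≠ A1 ∧ D ≠ A2 := by
    intro D hD
    have h' := mem_erase.mp hD
    have h'' := mem_erase.mp h'.2
    exact ⟨h''.2, h''.1, h'.1⟩
  refine ⟨?_, ?_, ?_⟩
  · intro C hC
    rcases mem_insert.mp hC with rfl | hC'
    · obtain ⟨v, hv⟩ := hP.1 A1 h1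
      exact ⟨v, mem_union_left _ hv⟩
    · exact hP.1 C (hmemE hC').1
  · intro C hC C' hC' hne
    rcases mem_insert.mp hC with rfl | hCe <;> rcases mem_insert.mp hC' with rfl | hC'e
    · exact absurd rfl hne
    · obtain ⟨hC'P, hne1, hne2⟩ := hmemE hC'e
      exact Finset.disjoint_union_left.mpr
        ⟨hP.2.1 _ h1 _ hC'P (Ne.symm hne1), hP.2.1 _ h2 _ hC'P (Ne.symm hne2)⟩
    · obtain ⟨hCP, hne1, hne2⟩ := hmemE hCe
      exact Finset.disjoint_union_right.mpr ⟨hP.2.1 _ hCP _ h1 hne1, hP.2.1 _ hCP _ h2 hne2⟩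
    · exact hP.2.1 _ (hmemE hCe).1 _ (hmemE hC'e).1 hne
  · rw [Finset.eq_univ_iff_forall]
    intro v
    obtain ⟨A, hA, hvA⟩ := exists_part hP v
    rw [Finset.mem_sup]
    by_cases hA1 : A = A1
    · exact ⟨A1 ∪ A2, mem_insert_self _ _, mem_union_left _ (hA1 ▸ hvA)⟩
    by_cases hA2 : A = A2
    · exact ⟨A1 ∪ A2, mem_insert_self _ _, mem_union_right _ (hA2 ▸ hvA)⟩
    · exact ⟨A, mem_insert_of_mem (mem_erase.mpr ⟨hA2, mem_erase.mpr ⟨hA1, hA⟩⟩), hvA⟩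

lemma merge_card {P : Finset (Finset V)} (hP : IsPartitionOf P Finset.univ)
    {A1 A2 : Finset V} (h1 : A1 ∈ P) (h2 : A2 ∈ P) (h12 : A1 ≠ A2) :
    (insert (A1 ∪ A2) ((P.erase A1).erase A2)).card + 1 = P.card := by
  have hA2e : A2 ∈ P.erase A1 := mem_erase.mpr ⟨h12.symm, h2⟩
  have hnotin : A1 ∪ A2 ∉ (P.erase A1).erase A2 := fun h =>
    union_not_mem hP h1 h2 h12 (mem_of_mem_erase (mem_of_mem_erase h))
  rw [card_insert_of_notMem hnotin, card_erase_of_mem hA2e, card_erase_of_mem h1]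
  have : 2 ≤ P.card := Finset.one_lt_card.mpr ⟨A1, h1, A2, h2, h12⟩
  omega

lemma meetP_card {P Q : Finset (Finset V)} (hP : IsPartitionOf P Finset.univ)
    (hQ : IsPartitionOf Q Finset.univ) :
    (meetP P Q).card = ∑ A ∈ P, (Q.filter fun B => (A ∩ B).Nonempty).card := by
  rw [meetP, card_biUnion]
  · refine sum_congr rfl fun A hA => ?_
    apply card_image_of_injOn
    intro B hB B' hB' heq
    simp only [coe_filter, Set.mem_setOf_eq] at hB hB'
    obtain ⟨hBQ, v, hv⟩ := hB
    have hv' : v ∈ A ∩ B' := by rw [← show (fun B => A ∩ B) B' = A ∩ B' from rfl, ← heq]; exact hv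
    exact part_unique hQ hBQ hB'.1 (mem_inter.mp hv).2 (mem_inter.mp hv').2
  · intro A hA A' hA' hne
    rw [Function.onFun, Finset.disjoint_left]
    intro C hC hC'
    obtain ⟨B, hB, rfl⟩ := mem_image.mp hC
    obtain ⟨B', hB', heq⟩ := mem_image.mp hC'
    obtain ⟨hBQ, v, hv⟩ := mem_filter.mp hB
    have hv2 : v ∈ A' ∩ B' := by rw [heq]; exact hv
    exact hne (part_unique hP hA hA' (mem_inter.mp hv).1 (mem_inter.mp hv2).1)

lemma eqvGen_mono' {β : Type*} {r p : β → β → Prop}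
    (h : ∀ a b, r a b → Relation.EqvGen p a b) :
    ∀ {a b}, Relation.EqvGen r a b → Relation.EqvGen p a b := by
  intro a b hr
  induction hr with
  | rel x y h' => exact h x y h'
  | refl x => exact .refl x
  | symm x y _ ih => exact .symm _ _ ih
  | trans x y z _ _ ih1 ih2 => exact .trans _ _ _ ih1 ih2

lemma joinP_merge {P Q : Finset (Finset V)} {A1 A2 : Finset V}
    (h1 : A1 ∈ P) (h2 : A2 ∈ P) {B0 : Finset V} (hB0 : B0 ∈ Q)
    (hn1 : (A1 ∩ B0).Nonempty) (hn2 : (A2 ∩ B0).Nonempty) :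
    joinP (insert (A1 ∪ A2) ((P.erase A1).erase A2)) Q = joinP P Q := by
  have hrel : ∀ v w, JoinRel (insert (A1 ∪ A2) ((P.erase A1).erase A2)) Q v w ↔
      JoinRel P Q v w := by
    intro v w
    constructor
    · apply eqvGen_mono'
      rintro a b ⟨C, hC, haC, hbC⟩
      rcases mem_union.mp hC with hCP | hCQ
      · rcases mem_insert.mp hCP with rfl | hCe
        · obtain ⟨p, hp⟩ := hn1
          obtain ⟨q, hq⟩ := hn2
          have hlink : ∀ z ∈ A1 ∪ A2, JoinRel P Q z p := by
            intro z hz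
            rcases mem_union.mp hz with h | h
            · exact .rel _ _ ⟨A1, mem_union_left _ h1, h, (mem_inter.mp hp).1⟩
            · exact .trans _ _ _ (.rel _ _ ⟨A2, mem_union_left _ h2, h, (mem_inter.mp hq).1⟩)
                (.rel _ _ ⟨B0, mem_union_right _ hB0, (mem_inter.mp hq).2, (mem_inter.mp hp).2⟩)
          exact .trans _ _ _ (hlink a haC) (.symm _ _ (hlink b hbC))
        · exact .rel _ _ ⟨C, mem_union_left _ (mem_of_mem_erase (mem_of_mem_erase hCe)), haC, hbC⟩
      · exact .rel _ _ ⟨C, mem_union_right _ hCQ, haC, hbC⟩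
    · apply eqvGen_mono'
      rintro a b ⟨C, hC, haC, hbC⟩
      rcases mem_union.mp hC with hCP | hCQ
      · by_cases hCA1 : C = A1
        · exact .rel _ _ ⟨A1 ∪ A2, mem_union_left _ (mem_insert_self _ _),
            mem_union_left _ (hCA1 ▸ haC), mem_union_left _ (hCA1 ▸ hbC)⟩
        by_cases hCA2 : C = A2
        · exact .rel _ _ ⟨A1 ∪ A2, mem_union_left _ (mem_insert_self _ _),
            mem_union_right _ (hCA2 ▸ haC), mem_union_right _ (hCA2 ▸ hbC)⟩
        · exact .rel _ _ ⟨C, mem_union_left _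
            (mem_insert_of_mem (mem_erase.mpr ⟨hCA2, mem_erase.mpr ⟨hCA1, hCP⟩⟩)), haC, hbC⟩
      · exact .rel _ _ ⟨C, mem_union_right _ hCQ, haC, hbC⟩
  unfold joinP
  have hfun : (fun v => Finset.univ.filter fun w =>
      JoinRel (insert (A1 ∪ A2) ((P.erase A1).erase A2)) Q v w) =
      (fun v => Finset.univ.filter fun w => JoinRel P Q v w) := by
    funext v
    ext w
    simp only [mem_filter, mem_univ, true_and, hrel]
  rw [hfun]

lemma meetP_eq_of_le {P Q : Finset (Finset V)} (hP : IsPartitionOf P Finset.univ)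
    (hQ : IsPartitionOf Q Finset.univ) (hle : ∀ B ∈ Q, ∃ A ∈ P, B ⊆ A) :
    meetP P Q = Q := by
  ext C
  rw [mem_meetP]
  constructor
  · rintro ⟨A, hA, B, hB, hn, rfl⟩
    obtain ⟨A', hA', hBA'⟩ := hle B hB
    obtain ⟨v, hv⟩ := hn
    have hAA : A = A' := part_unique hP hA hA' (mem_inter.mp hv).1 (hBA' (mem_inter.mp hv).2)
    rw [hAA, Finset.inter_eq_right.mpr hBA']
    exact hB
  · intro hC
    obtain ⟨A, hA, hCA⟩ := hle C hC
    exact ⟨A, hA, C, hC, by rw [Finset.inter_eq_right.mpr hCA]; exact hQ.1 C hC,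
      Finset.inter_eq_right.mpr hCA⟩

lemma joinP_eq_of_le {P Q : Finset (Finset V)} (hP : IsPartitionOf P Finset.univ)
    (hQ : IsPartitionOf Q Finset.univ) (hle : ∀ B ∈ Q, ∃ A ∈ P, B ⊆ A) :
    joinP P Q = P := by
  have hrel : ∀ v w, JoinRel P Q v w ↔ ∃ A ∈ P, v ∈ A ∧ w ∈ A := by
    intro v w
    constructor
    · intro h
      induction h with
      | rel a b hab =>
          obtain ⟨C, hC, haC, hbC⟩ := hab
          rcases mem_union.mp hC with h | h
          · exact ⟨C, h, haC, hbC⟩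
          · obtain ⟨A, hA, hsub⟩ := hle C h
            exact ⟨A, hA, hsub haC, hsub hbC⟩
      | refl a =>
          obtain ⟨A, hA, haA⟩ := exists_part hP a
          exact ⟨A, hA, haA, haA⟩
      | symm a b _ ih =>
          obtain ⟨A, hA, hb1, hb2⟩ := ih
          exact ⟨A, hA, hb2, hb1⟩
      | trans a b c _ _ ih1 ih2 =>
          obtain ⟨A, hA, ha1, ha2⟩ := ih1
          obtain ⟨A', hA', hb1, hb2⟩ := ih2
          exact ⟨A, hA, ha1, (part_unique hP hA' hA hb1 ha2) ▸ hb2⟩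
    · rintro ⟨A, hA, hv1, hv2⟩
      exact .rel _ _ ⟨A, mem_union_left _ hA, hv1, hv2⟩
  ext X
  simp only [joinP, mem_image, mem_univ, true_and]
  constructor
  · rintro ⟨v, rfl⟩
    obtain ⟨A, hA, hvA⟩ := exists_part hP v
    have hXA : (Finset.univ.filter fun w => JoinRel P Q v w) = A := by
      ext w
      simp only [mem_filter, mem_univ, true_and, hrel]
      constructor
      · rintro ⟨A', hA', hv', hw'⟩
        exact (part_unique hP hA' hA hv' hvA) ▸ hw'
      · intro hw
        exact ⟨A, hA, hvA, hw⟩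
    rw [hXA]
    exact hA
  · intro hX
    obtain ⟨v, hv⟩ := hP.1 X hX
    refine ⟨v, ?_⟩
    ext w
    simp only [mem_filter, mem_univ, true_and, hrel]
    constructor
    · rintro ⟨A', hA', hv', hw'⟩
      exact (part_unique hP hA' hX hv' hv) ▸ hw'
    · intro hw
      exact ⟨X, hX, hv, hw⟩

lemma supermod (hV : Nonempty V) (n : ℕ) :
    ∀ P Q : Finset (Finset V), P.card ≤ n → IsPartitionOf P Finset.univ →
      IsPartitionOf Q Finset.univ →
      P.card + Q.card ≤ (meetP P Q).card + (joinP P Q).card := by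
  induction n with
  | zero =>
      intro P Q hc hP hQ
      exfalso
      have hP0 : P = ∅ := card_eq_zero.mp (le_antisymm hc (Nat.zero_le _))
      have h2 := hP.2.2
      rw [hP0] at h2
      simp only [Finset.sup_empty] at h2
      exact (Finset.univ_nonempty (α := V)).ne_empty h2.symm
  | succ n ih =>
      intro P Q hc hP hQ
      by_cases hle : ∀ B ∈ Q, ∃ A ∈ P, B ⊆ A
      · rw [meetP_eq_of_le hP hQ hle, joinP_eq_of_le hP hQ hle, add_comm]
      · push_neg at hle
        obtain ⟨B0, hB0, hB0n⟩ := hle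
        obtain ⟨v0, hv0⟩ := hQ.1 B0 hB0
        obtain ⟨A1, h1, hv0A⟩ := exists_part hP v0
        obtain ⟨w0, hw0B, hw0A⟩ := Finset.not_subset.mp (hB0n A1 h1)
        obtain ⟨A2, h2, hw0A2⟩ := exists_part hP w0
        have h12 : A1 ≠ A2 := fun h => hw0A (h ▸ hw0A2)
        have hP'p := merge_isPartition hP h1 h2 h12
        have hcard : (insert (A1 ∪ A2) ((P.erase A1).erase A2)).card + 1 = P.card :=
          merge_card hP h1 h2 h12
        have hkey := ih (insert (A1 ∪ A2) ((P.erase A1).erase A2)) Q (by omega) hP'p hQ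
        have hjoin : joinP (insert (A1 ∪ A2) ((P.erase A1).erase A2)) Q = joinP P Q :=
          joinP_merge h1 h2 hB0 ⟨v0, mem_inter.mpr ⟨hv0A, hv0⟩⟩
            ⟨w0, mem_inter.mpr ⟨hw0A2, hw0B⟩⟩
        have hmeet : (meetP (insert (A1 ∪ A2) ((P.erase A1).erase A2)) Q).card + 1 ≤
            (meetP P Q).card := by
          rw [meetP_card hP'p hQ, meetP_card hP hQ]
          set f : Finset V → ℕ := fun A => (Q.filter fun B => (A ∩ B).Nonempty).card with hf
          have hnotin : A1 ∪ A2 ∉ (P.erase A1).erase A2 := fun h =>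
            union_not_mem hP h1 h2 h12 (mem_of_mem_erase (mem_of_mem_erase h))
          rw [sum_insert hnotin]
          have hA2e : A2 ∈ P.erase A1 := mem_erase.mpr ⟨h12.symm, h2⟩
          have hs1 : f A1 + ∑ A ∈ P.erase A1, f A = ∑ A ∈ P, f A :=
            Finset.add_sum_erase _ f h1
          have hs2 : f A2 + ∑ A ∈ (P.erase A1).erase A2, f A = ∑ A ∈ P.erase A1, f A :=
            Finset.add_sum_erase _ f hA2e
          have hsplit : f (A1 ∪ A2) + 1 ≤ f A1 + f A2 := by
            have hfe : (Q.filter fun B => ((A1 ∪ A2) ∩ B).Nonempty) =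
                (Q.filter fun B => (A1 ∩ B).Nonempty) ∪
                  (Q.filter fun B => (A2 ∩ B).Nonempty) := by
              rw [← filter_or]
              apply filter_congr
              intro B _
              rw [Finset.union_inter_distrib_right]
              constructor
              · rintro ⟨v, hv⟩
                rcases mem_union.mp hv with h | h
                · exact Or.inl ⟨v, h⟩
                · exact Or.inr ⟨v, h⟩
              · rintro (⟨v, hv⟩ | ⟨v, hv⟩)
                · exact ⟨v, mem_union_left _ hv⟩
                · exact ⟨v, mem_union_right _ hv⟩
            have hcui := Finset.card_union_add_card_inter
              (Q.filter fun B => (A1 ∩ B).Nonempty) (Q.filter fun B => (A2 ∩ B).Nonempty)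
            have hB0i : B0 ∈ (Q.filter fun B => (A1 ∩ B).Nonempty) ∩
                (Q.filter fun B => (A2 ∩ B).Nonempty) := by
              rw [mem_inter]
              exact ⟨mem_filter.mpr ⟨hB0, v0, mem_inter.mpr ⟨hv0A, hv0⟩⟩,
                mem_filter.mpr ⟨hB0, w0, mem_inter.mpr ⟨hw0A2, hw0B⟩⟩⟩
            have hpos : 1 ≤ ((Q.filter fun B => (A1 ∩ B).Nonempty) ∩
                (Q.filter fun B => (A2 ∩ B).Nonempty)).card := card_pos.mpr ⟨B0, hB0i⟩
            have : f (A1 ∪ A2) = ((Q.filter fun B => (A1 ∩ B).Nonempty) ∪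
                (Q.filter fun B => (A2 ∩ B).Nonempty)).card := by
              show (Q.filter fun B => ((A1 ∪ A2) ∩ B).Nonempty).card = _
              rw [hfe]
            have e1 : f A1 = (Q.filter fun B => (A1 ∩ B).Nonempty).card := rfl
            have e2 : f A2 = (Q.filter fun B => (A2 ∩ B).Nonempty).card := rfl
            omega
          have e3 : #(Finset.filter (fun B => ((A1 ∪ A2) ∩ B).Nonempty) Q) = f (A1 ∪ A2) := rfl
          have e4 : ∑ x ∈ (P.erase A1).erase A2, #(Finset.filter (fun B => (x ∩ B).Nonempty) Q)
              = ∑ x ∈ (P.erase A1).erase A2, f x := rfl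
          have e5 : P.sum f = ∑ x ∈ P, f x := rfl
          rw [e3, e4, e5]
          omega
        rw [hjoin] at hkey
        omega

lemma uncross [DecidableEq α] (hV : Nonempty V) {edge : α → Finset V} {E : Finset α}
    {k : ℕ} {u : α → ℕ} (hE : ∀ e ∈ E, 2 ≤ (edge e).card) {x : α → ℝ}
    (hx : x ∈ reinforcementQ edge E k u) {P P' : Finset (Finset V)}
    (hP : IsPartition P) (hP' : IsPartition P')
    (ht : ∑ e ∈ delta edge E P, x e = (k : ℝ) * ((P.card : ℝ) - 1))
    (ht' : ∑ e ∈ delta edge E P', x e = (k : ℝ) * ((P'.card : ℝ) - 1)) :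
    IsPartition (joinP P P') ∧
    (∑ e ∈ delta edge E (joinP P P'), x e = (k : ℝ) * (((joinP P P').card : ℝ) - 1)) ∧
    ∀ e ∈ E, 0 < x e → e ∈ delta edge E P → e ∈ delta edge E P' →
      e ∈ delta edge E (joinP P P') := by
  have hM : IsPartitionOf (meetP P P') Finset.univ := meetP_isPartition hP hP'
  have hJ : IsPartition (joinP P P') := joinP_isPartition
  have hδJP : delta edge E (joinP P P') ⊆ delta edge E P :=
    delta_anti hP hJ (refines_joinP_left hP)
  have hδJP' : delta edge E (joinP P P') ⊆ delta edge E P' :=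
    delta_anti hP' hJ (refines_joinP_right hP')
  have hδM := delta_meetP_subset hE hP hP'
  set DM := delta edge E (meetP P P') with hDM
  set DJ := delta edge E (joinP P P') with hDJ
  set DP := delta edge E P with hDP
  set DP' := delta edge E P' with hDP'
  have hs : ∀ D : Finset α, D ⊆ E → ∑ e ∈ D, x e = ∑ e ∈ E, if e ∈ D then x e else 0 := by
    intro D hD
    rw [← Finset.sum_filter, Finset.filter_mem_eq_inter, Finset.inter_eq_right.mpr hD]
  have hterm : ∀ e ∈ E, (if e ∈ DM then x e else 0) + (if e ∈ DJ then x e else 0) ≤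
      (if e ∈ DP then x e else 0) + (if e ∈ DP' then x e else 0) := by
    intro e he
    have hx0 := (hx.1 e he).1
    by_cases h2 : e ∈ DJ
    · have hp := hδJP h2
      have hp' := hδJP' h2
      split_ifs <;> first | linarith | tauto
    · by_cases h1 : e ∈ DM
      · rcases mem_union.mp (hδM h1) with hp | hp <;> split_ifs <;> first | linarith | tauto
      · split_ifs <;> first | linarith | tauto
  have hsubM : DM ⊆ E := filter_subset _ _
  have hsubJ : DJ ⊆ E := filter_subset _ _
  have hsubP : DP ⊆ E := filter_subset _ _
  have hsubP' : DP' ⊆ E := filter_subset _ _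
  have s1 : ∑ e ∈ DM, x e + ∑ e ∈ DJ, x e ≤ ∑ e ∈ DP, x e + ∑ e ∈ DP', x e := by
    rw [hs DM hsubM, hs DJ hsubJ, hs DP hsubP, hs DP' hsubP', ← Finset.sum_add_distrib,
      ← Finset.sum_add_distrib]
    exact Finset.sum_le_sum hterm
  have c2 := hx.2 _ hM
  have c3 := hx.2 _ hJ
  have hsup := supermod hV P.card P P' le_rfl hP hP'
  have hk0 : (0:ℝ) ≤ (k:ℝ) := Nat.cast_nonneg k
  have hcast : (P.card:ℝ) + (P'.card:ℝ) ≤ ((meetP P P').card:ℝ) + ((joinP P P').card:ℝ) := by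
    exact_mod_cast hsup
  have s3 : (k:ℝ) * ((P.card:ℝ) - 1) + (k:ℝ) * ((P'.card:ℝ) - 1) ≤
      (k:ℝ) * (((meetP P P').card:ℝ) - 1) + (k:ℝ) * (((joinP P P').card:ℝ) - 1) := by
    nlinarith
  have eJ : ∑ e ∈ DJ, x e = (k:ℝ) * (((joinP P P').card:ℝ) - 1) := by linarith
  refine ⟨hJ, eJ, ?_⟩
  have heqsum : ∑ e ∈ DM, x e + ∑ e ∈ DJ, x e = ∑ e ∈ DP, x e + ∑ e ∈ DP', x e :=
    le_antisymm s1 (by linarith)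
  intro e he hxpos hmemP hmemP'
  by_contra hnJ
  have hstrict : (if e ∈ DM then x e else 0) + (if e ∈ DJ then x e else 0) <
      (if e ∈ DP then x e else 0) + (if e ∈ DP' then x e else 0) := by
    rw [if_pos hmemP, if_pos hmemP', if_neg hnJ]
    split_ifs <;> linarith
  have hlt : ∑ e ∈ DM, x e + ∑ e ∈ DJ, x e < ∑ e ∈ DP, x e + ∑ e ∈ DP', x e := by
    rw [hs DM hsubM, hs DJ hsubJ, hs DP hsubP, hs DP' hsubP', ← Finset.sum_add_distrib,
      ← Finset.sum_add_distrib]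
    exact Finset.sum_lt_sum hterm ⟨e, he, hstrict⟩
  linarith

end Aux

set_option maxHeartbeats 2000000 in
/-- if the reinforcement LP `min { d·x : x ∈ Q }` is feasible,
then it has an integer optimal solution. -/
theorem reinforcement_integer_optimum [Fintype V] [DecidableEq V] [DecidableEq α]
    (edge : α → Finset V) (E : Finset α)
    (hV : 1 ≤ Fintype.card V) (hE : ∀ e ∈ E, 2 ≤ (edge e).card)
    (k : ℕ) (hk : 0 < k) (u : α → ℕ) (d : α → ℝ) (hd : ∀ e ∈ E, 0 ≤ d e)
    (hne : (reinforcementQ edge E k u).Nonempty) :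
    ∃ xs ∈ reinforcementQ edge E k u,
      (∀ e ∈ E, ∃ n : ℤ, xs e = n) ∧
      ∀ x ∈ reinforcementQ edge E k u,
        (∑ e ∈ E, d e * xs e) ≤ ∑ e ∈ E, d e * x e := by
  classical
  have hVne : Nonempty V := Fintype.card_pos_iff.mp hV
  set Q := reinforcementQ edge E k u with hQdef
  set obj : (α → ℝ) → ℝ := fun x => ∑ e ∈ E, d e * x e with hobj
  have hdeltaE : ∀ Ps : Finset (Finset V), delta edge E Ps ⊆ E := fun Ps => filter_subset _ _
  have hπQ : ∀ x ∈ Q, (fun e => if e ∈ E then x e else 0) ∈ Q := by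
    intro x hx
    constructor
    · intro e he
      simp only [if_pos he]
      exact hx.1 e he
    · intro Ps hPs
      have hss : ∑ e ∈ delta edge E Ps, (if e ∈ E then x e else 0) =
          ∑ e ∈ delta edge E Ps, x e :=
        Finset.sum_congr rfl fun e heD => if_pos (hdeltaE Ps heD)
      rw [hss]
      exact hx.2 Ps hPs
  have hπobj : ∀ x : α → ℝ, obj (fun e => if e ∈ E then x e else 0) = obj x := by
    intro x
    show (∑ e ∈ E, d e * (if e ∈ E then x e else 0)) = ∑ e ∈ E, d e * x e
    apply Finset.sum_congr rfl
    intro e he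
    simp [he]
  set Z : Set (α → ℝ) := {x | ∀ e, e ∉ E → x e = 0} with hZdef
  have hQ0ne : (Q ∩ Z).Nonempty := by
    obtain ⟨x, hx⟩ := hne
    exact ⟨fun e => if e ∈ E then x e else 0, hπQ x hx, fun e he => if_neg he⟩
  have hQc : IsClosed Q := by
    have h1 : IsClosed {x : α → ℝ | ∀ e ∈ E, 0 ≤ x e ∧ x e ≤ (u e : ℝ)} := by
      have he : {x : α → ℝ | ∀ e ∈ E, 0 ≤ x e ∧ x e ≤ (u e : ℝ)} =
          ⋂ e ∈ (E : Set α), ({x : α → ℝ | 0 ≤ x e} ∩ {x | x e ≤ (u e : ℝ)}) := by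
        ext x
        simp
      rw [he]
      exact isClosed_biInter fun e _ =>
        (isClosed_le continuous_const (continuous_apply e)).inter
          (isClosed_le (continuous_apply e) continuous_const)
    have h2 : IsClosed {x : α → ℝ | ∀ Ps : Finset (Finset V), IsPartition Ps →
        (k:ℝ) * ((Ps.card:ℝ) - 1) ≤ ∑ e ∈ delta edge E Ps, x e} := by
      have he : {x : α → ℝ | ∀ Ps : Finset (Finset V), IsPartition Ps →
          (k:ℝ) * ((Ps.card:ℝ) - 1) ≤ ∑ e ∈ delta edge E Ps, x e} =
          ⋂ Ps ∈ {Ps : Finset (Finset V) | IsPartition Ps},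
            {x : α → ℝ | (k:ℝ) * ((Ps.card:ℝ) - 1) ≤ ∑ e ∈ delta edge E Ps, x e} := by
        ext x
        simp
      rw [he]
      exact isClosed_biInter fun Ps _ =>
        isClosed_le continuous_const (continuous_finset_sum _ fun e _ => continuous_apply e)
    have hQi : Q = {x : α → ℝ | ∀ e ∈ E, 0 ≤ x e ∧ x e ≤ (u e : ℝ)} ∩
        {x | ∀ Ps : Finset (Finset V), IsPartition Ps →
          (k:ℝ) * ((Ps.card:ℝ) - 1) ≤ ∑ e ∈ delta edge E Ps, x e} := rfl
    rw [hQi]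
    exact h1.inter h2
  have hZc : IsClosed Z := by
    have he : Z = ⋂ e ∈ {e : α | e ∉ E}, {x : α → ℝ | x e = 0} := by
      ext x
      simp [hZdef]
    rw [he]
    exact isClosed_biInter fun e _ => isClosed_eq (continuous_apply e) continuous_const
  have hK : IsCompact (Set.univ.pi fun e : α =>
      if e ∈ E then Set.Icc (0:ℝ) (u e) else ({0} : Set ℝ)) := by
    apply isCompact_univ_pi
    intro e
    by_cases he : e ∈ E
    · simp only [if_pos he]
      exact isCompact_Icc
    · simp only [if_neg he]
      exact isCompact_singleton
  have hQ0sub : Q ∩ Z ⊆ Set.univ.pi fun e : α =>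
      if e ∈ E then Set.Icc (0:ℝ) (u e) else ({0} : Set ℝ) := by
    rintro x ⟨hxQ, hxZ⟩
    rw [Set.mem_univ_pi]
    intro e
    by_cases he : e ∈ E
    · simp only [if_pos he]
      exact ⟨(hxQ.1 e he).1, (hxQ.1 e he).2⟩
    · simp only [if_neg he, Set.mem_singleton_iff]
      exact hxZ e he
  have hQ0comp : IsCompact (Q ∩ Z) := hK.of_isClosed_subset (hQc.inter hZc) hQ0sub
  have hobjc : Continuous obj := continuous_finset_sum _ fun e _ =>
    continuous_const.mul (continuous_apply e)
  obtain ⟨x0, hx0, hx0min⟩ := hQ0comp.exists_isMinOn hQ0ne hobjc.continuousOn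
  set m := obj x0 with hm
  have hminQ : ∀ y ∈ Q, m ≤ obj y := by
    intro y hy
    have h1 : m ≤ obj (fun e => if e ∈ E then y e else 0) :=
      isMinOn_iff.mp hx0min _ ⟨hπQ y hy, fun e he => if_neg he⟩
    rwa [hπobj y] at h1
  set O : Set (α → ℝ) := (Q ∩ Z) ∩ {x | obj x = m} with hO
  have hOcomp : IsCompact O := hQ0comp.inter_right (isClosed_eq hobjc continuous_const)
  obtain ⟨xs, hxsO, hxsext⟩ := exists_quasi_extreme E.toList O hOcomp ⟨x0, hx0, rfl⟩
  have hxsQ : xs ∈ Q := hxsO.1.1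
  have hxsZ : ∀ e, e ∉ E → xs e = 0 := hxsO.1.2
  have hxsobj : obj xs = m := hxsO.2
  have hmxs : ∑ e ∈ E, d e * xs e = m := hxsobj
  refine ⟨xs, hxsQ, ?_, fun y hy => by rw [hmxs]; exact hminQ y hy⟩
  by_contra hcon
  push_neg at hcon
  set F : Finset α := E.filter (fun e => ¬ ∃ n : ℤ, xs e = (n:ℝ)) with hF
  have hFne : F.Nonempty := by
    obtain ⟨e, he, hint⟩ := hcon
    exact ⟨e, mem_filter.mpr ⟨he, fun ⟨n, hn⟩ => hint n hn⟩⟩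
  have hFsub : F ⊆ E := filter_subset _ _
  have hfrac : ∀ e ∈ F, 0 < xs e ∧ xs e < (u e : ℝ) := by
    intro e heF
    obtain ⟨heE, hni⟩ := mem_filter.mp heF
    have h1 := (hxsQ.1 e heE).1
    have h2 := (hxsQ.1 e heE).2
    constructor
    · rcases lt_or_eq_of_le h1 with h | h
      · exact h
      · exact absurd ⟨0, by simp [← h]⟩ hni
    · rcases lt_or_eq_of_le h2 with h | h
      · exact h
      · exact absurd ⟨(u e : ℤ), by simp [h]⟩ hni
  have hIsum : ∀ s : Finset α, (∀ e ∈ s, ∃ n : ℤ, xs e = (n:ℝ)) →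
      ∃ n : ℤ, ∑ e ∈ s, xs e = (n:ℝ) := by
    intro s hs
    refine Finset.sum_induction xs (fun r => ∃ n : ℤ, r = (n:ℝ)) ?_ ⟨0, by simp⟩ hs
    rintro a b ⟨na, ha⟩ ⟨nb, hb⟩
    exact ⟨na + nb, by rw [ha, hb]; push_cast; ring⟩
  -- existence of a feasible perturbation direction
  have hW : ∃ w : α → ℝ, (∃ e ∈ F, w e ≠ 0) ∧ (∀ e, w e ≠ 0 → e ∈ F) ∧ (∀ e, |w e| ≤ 1) ∧
      ∀ Ps : Finset (Finset V), IsPartition Ps →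
        (∑ e ∈ delta edge E Ps, xs e = (k:ℝ) * ((Ps.card:ℝ) - 1)) →
        ∑ e ∈ delta edge E Ps, w e = 0 := by
    set S : Finset (Finset α) := (((Finset.univ : Finset (Finset (Finset V))).filter
      fun Ps => IsPartition Ps ∧
        ∑ e ∈ delta edge E Ps, xs e = (k:ℝ) * ((Ps.card:ℝ) - 1)).image
      fun Ps => delta edge E Ps ∩ F).filter (fun M => M.Nonempty) with hS
    by_cases hSne : S.Nonempty
    · obtain ⟨M, hMS, hMmin⟩ := S.exists_min_image Finset.card hSne
      obtain ⟨hMim, hMne⟩ := mem_filter.mp hMS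
      obtain ⟨P1, hP1f, hMdef⟩ := mem_image.mp hMim
      obtain ⟨-, hP1, hP1t⟩ := mem_filter.mp hP1f
      have hone : M.card ≠ 1 := by
        intro hc
        obtain ⟨e0, he0⟩ := Finset.card_eq_one.mp hc
        have he0M : e0 ∈ M := by rw [he0]; exact mem_singleton_self e0
        have he0MF : e0 ∈ delta edge E P1 ∩ F := by rw [hMdef]; exact he0M
        have he0F : e0 ∈ F := (mem_inter.mp he0MF).2
        have he0ni := (mem_filter.mp he0F).2
        have hsplit := Finset.sum_filter_add_sum_filter_not (delta edge E P1)
          (fun e => e ∈ F) xs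
        have hfilt : (delta edge E P1).filter (fun e => e ∈ F) = delta edge E P1 ∩ F :=
          Finset.filter_mem_eq_inter
        have hint_nonF : ∃ n : ℤ,
            ∑ e ∈ (delta edge E P1).filter (fun e => ¬ e ∈ F), xs e = (n:ℝ) := by
          apply hIsum
          intro e hemem
          obtain ⟨heD, henF⟩ := mem_filter.mp hemem
          have heE : e ∈ E := hdeltaE P1 heD
          by_contra hno
          exact henF (mem_filter.mpr ⟨heE, hno⟩)
        have hint_tot : ∃ n : ℤ, ∑ e ∈ delta edge E P1, xs e = (n:ℝ) :=
          ⟨k * P1.card - k, by rw [hP1t]; push_cast; ring⟩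
        obtain ⟨n1, hn1⟩ := hint_nonF
        obtain ⟨n2, hn2⟩ := hint_tot
        apply he0ni
        refine ⟨n2 - n1, ?_⟩
        have hsum_e0 : ∑ e ∈ (delta edge E P1).filter (fun e => e ∈ F), xs e = xs e0 := by
          rw [hfilt, hMdef, he0, Finset.sum_singleton]
        have h5 : xs e0 + (n1:ℝ) = (n2:ℝ) := by
          rw [← hsum_e0, ← hn1, ← hn2]
          exact hsplit
        push_cast
        linarith
      have hM2 : 2 ≤ M.card := by
        have := Finset.card_pos.mpr hMne
        omega
      obtain ⟨e0, he0M, f, hfM, hef⟩ := Finset.one_lt_card.mp hM2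
      have he0MF : e0 ∈ delta edge E P1 ∩ F := by rw [hMdef]; exact he0M
      have hfMF : f ∈ delta edge E P1 ∩ F := by rw [hMdef]; exact hfM
      have he0F : e0 ∈ F := (mem_inter.mp he0MF).2
      have hfF : f ∈ F := (mem_inter.mp hfMF).2
      have hgen : ∀ a b, a ∈ M → b ∈ M → ∀ Ps : Finset (Finset V), IsPartition Ps →
          (∑ e ∈ delta edge E Ps, xs e = (k:ℝ) * ((Ps.card:ℝ) - 1)) →
          a ∈ delta edge E Ps → b ∈ delta edge E Ps := by
        intro a b haM hbM Ps hPs hPst haP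
        have haMF : a ∈ delta edge E P1 ∩ F := by rw [hMdef]; exact haM
        have haF : a ∈ F := (mem_inter.mp haMF).2
        have haD1 : a ∈ delta edge E P1 := (mem_inter.mp haMF).1
        have haE : a ∈ E := hFsub haF
        have hapos : 0 < xs a := (hfrac a haF).1
        obtain ⟨hJp, hJt, hmult⟩ := uncross hVne hE hxsQ hPs hP1 hPst hP1t
        have haJ : a ∈ delta edge E (joinP Ps P1) := hmult a haE hapos haP haD1
        have hJsub1 : delta edge E (joinP Ps P1) ⊆ delta edge E P1 :=
          delta_anti hP1 hJp (refines_joinP_right hP1)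
        have hJsubP : delta edge E (joinP Ps P1) ⊆ delta edge E Ps :=
          delta_anti hPs hJp (refines_joinP_left hPs)
        have hJF_sub : delta edge E (joinP Ps P1) ∩ F ⊆ M := by
          rw [← hMdef]
          exact inter_subset_inter hJsub1 (Finset.Subset.refl F)
        have hJF_mem : delta edge E (joinP Ps P1) ∩ F ∈ S :=
          mem_filter.mpr ⟨mem_image.mpr ⟨joinP Ps P1,
            mem_filter.mpr ⟨mem_univ _, hJp, hJt⟩, rfl⟩,
            ⟨a, mem_inter.mpr ⟨haJ, haF⟩⟩⟩
        have heq : delta edge E (joinP Ps P1) ∩ F = M :=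
          Finset.eq_of_subset_of_card_le hJF_sub (hMmin _ hJF_mem)
        have hbMF : b ∈ delta edge E (joinP Ps P1) ∩ F := by rw [heq]; exact hbM
        exact hJsubP (mem_inter.mp hbMF).1
      have hkey : ∀ Ps : Finset (Finset V), IsPartition Ps →
          (∑ e ∈ delta edge E Ps, xs e = (k:ℝ) * ((Ps.card:ℝ) - 1)) →
          (e0 ∈ delta edge E Ps ↔ f ∈ delta edge E Ps) := by
        intro Ps hPs ht
        exact ⟨fun h => hgen e0 f he0M hfM Ps hPs ht h, fun h => hgen f e0 hfM he0M Ps hPs ht h⟩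
      refine ⟨fun e => (if e = e0 then (1:ℝ) else 0) - (if e = f then 1 else 0),
        ⟨e0, he0F, by simp [hef]⟩, ?_, ?_, ?_⟩
      · intro e hwe
        by_cases h1 : e = e0
        · exact h1 ▸ he0F
        by_cases h2 : e = f
        · exact h2 ▸ hfF
        · simp [h1, h2] at hwe
      · intro e
        show |(if e = e0 then (1:ℝ) else 0) - (if e = f then 1 else 0)| ≤ 1
        split_ifs <;> norm_num
      · intro Ps hPs htight
        have hiff := hkey Ps hPs htight
        rw [Finset.sum_sub_distrib, Finset.sum_ite_eq' (delta edge E Ps) e0 (fun _ => (1:ℝ)),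
          Finset.sum_ite_eq' (delta edge E Ps) f (fun _ => (1:ℝ))]
        by_cases h : e0 ∈ delta edge E Ps
        · rw [if_pos h, if_pos (hiff.mp h)]
          ring
        · rw [if_neg h, if_neg fun hfm => h (hiff.mpr hfm)]
          ring
    · obtain ⟨e0, he0⟩ := hFne
      refine ⟨fun e => if e = e0 then 1 else 0, ⟨e0, he0, by simp⟩, ?_, ?_, ?_⟩
      · intro e hwe
        by_cases h : e = e0
        · exact h ▸ he0
        · simp [h] at hwe
      · intro e
        by_cases h : e = e0 <;> simp [h]
      · intro Ps hPs htight
        have h0 : e0 ∉ delta edge E Ps := by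
          intro hmem
          exact hSne ⟨delta edge E Ps ∩ F, mem_filter.mpr ⟨mem_image.mpr ⟨Ps,
            mem_filter.mpr ⟨mem_univ _, hPs, htight⟩, rfl⟩,
            ⟨e0, mem_inter.mpr ⟨hmem, he0⟩⟩⟩⟩
        rw [Finset.sum_ite_eq' (delta edge E Ps) e0 (fun _ => (1:ℝ)), if_neg h0]
  obtain ⟨w, ⟨estar, hestar, hwestar⟩, hwsupp, hwbound, hwtight⟩ := hW
  set Cb : ℝ := (E.card : ℝ) + 1 with hCb
  have hCbpos : 0 < Cb := by
    rw [hCb]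
    have : (0:ℝ) ≤ (E.card : ℝ) := Nat.cast_nonneg _
    linarith
  have hsumw_bound : ∀ Ps : Finset (Finset V), |∑ e ∈ delta edge E Ps, w e| ≤ Cb := by
    intro Ps
    calc |∑ e ∈ delta edge E Ps, w e| ≤ ∑ e ∈ delta edge E Ps, |w e| :=
          Finset.abs_sum_le_sum_abs _ _
      _ ≤ ∑ _e ∈ delta edge E Ps, (1:ℝ) := Finset.sum_le_sum fun e _ => hwbound e
      _ = ((delta edge E Ps).card : ℝ) := by simp
      _ ≤ Cb := by
          rw [hCb]
          have hcc := Finset.card_le_card (hdeltaE Ps)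
          have : ((delta edge E Ps).card : ℝ) ≤ (E.card : ℝ) := by exact_mod_cast hcc
          linarith
  set T : Finset (Finset (Finset V)) := Finset.univ.filter (fun Ps => IsPartition Ps ∧
    ¬ (∑ e ∈ delta edge E Ps, xs e = (k:ℝ) * ((Ps.card:ℝ) - 1))) with hT
  have hslackpos : ∀ Ps ∈ T,
      0 < (∑ e ∈ delta edge E Ps, xs e - (k:ℝ) * ((Ps.card:ℝ) - 1)) / Cb := by
    intro Ps hPsT
    obtain ⟨-, hPs, hnt⟩ := mem_filter.mp hPsT
    have hge := hxsQ.2 Ps hPs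
    have hgt : 0 < ∑ e ∈ delta edge E Ps, xs e - (k:ℝ) * ((Ps.card:ℝ) - 1) := by
      rcases lt_or_eq_of_le hge with h | h
      · linarith
      · exact absurd h.symm hnt
    exact div_pos hgt hCbpos
  set εb : ℝ := F.inf' hFne (fun e => min (xs e) ((u e : ℝ) - xs e)) with hεb
  have hεbpos : 0 < εb := by
    rw [hεb, Finset.lt_inf'_iff]
    intro e heF
    have hb := hfrac e heF
    exact lt_min hb.1 (by linarith [hb.2])
  set εs : ℝ := if hTne : T.Nonempty then
      T.inf' hTne (fun Ps => (∑ e ∈ delta edge E Ps, xs e - (k:ℝ) * ((Ps.card:ℝ) - 1)) / Cb)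
    else 1 with hεs
  have hεspos : 0 < εs := by
    rw [hεs]
    split_ifs with hTne
    · rw [Finset.lt_inf'_iff]
      exact fun Ps hPs => hslackpos Ps hPs
    · norm_num
  set ε : ℝ := min εb εs with hε
  have hεpos : 0 < ε := lt_min hεbpos hεspos
  have hmemQ0 : ∀ σ : ℝ, σ = 1 ∨ σ = -1 → (fun e => xs e + σ * (ε * w e)) ∈ Q ∩ Z := by
    intro σ hσ
    have hσ1 : |σ| = 1 := by rcases hσ with rfl | rfl <;> simp
    refine ⟨⟨?_, ?_⟩, ?_⟩
    · intro e he
      by_cases heF : e ∈ F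
      · have hb := hfrac e heF
        have h1 : ε ≤ xs e := le_trans (min_le_left _ _)
          (le_trans (Finset.inf'_le _ heF) (min_le_left _ _))
        have h2 : ε ≤ (u e : ℝ) - xs e := le_trans (min_le_left _ _)
          (le_trans (Finset.inf'_le _ heF) (min_le_right _ _))
        have habs : |σ * (ε * w e)| ≤ ε := by
          rw [abs_mul, hσ1, one_mul, abs_mul, abs_of_pos hεpos]
          nlinarith [hwbound e, abs_nonneg (w e), hεpos.le]
        have hb2 := abs_le.mp habs
        constructor
        · simp only []
          linarith [hb2.1]
        · simp only []
          linarith [hb2.2]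
      · have hwe : w e = 0 := by
          by_contra h
          exact heF (hwsupp e h)
        simp only [hwe, mul_zero, add_zero]
        exact hxsQ.1 e he
    · intro Ps hPs
      have hsum : ∑ e ∈ delta edge E Ps, (xs e + σ * (ε * w e)) =
          ∑ e ∈ delta edge E Ps, xs e + σ * ε * ∑ e ∈ delta edge E Ps, w e := by
        rw [Finset.sum_add_distrib, Finset.mul_sum]
        congr 1
        exact Finset.sum_congr rfl fun e _ => by ring
      by_cases htight : ∑ e ∈ delta edge E Ps, xs e = (k:ℝ) * ((Ps.card:ℝ) - 1)
      · rw [hsum, hwtight Ps hPs htight, mul_zero, add_zero, htight]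
      · have hPsT : Ps ∈ T := mem_filter.mpr ⟨mem_univ _, hPs, htight⟩
        have hTne : T.Nonempty := ⟨Ps, hPsT⟩
        have hεle : ε ≤ (∑ e ∈ delta edge E Ps, xs e - (k:ℝ) * ((Ps.card:ℝ) - 1)) / Cb := by
          refine le_trans (min_le_right _ _) ?_
          rw [hεs, dif_pos hTne]
          exact Finset.inf'_le _ hPsT
        have hslack : ε * Cb ≤ ∑ e ∈ delta edge E Ps, xs e - (k:ℝ) * ((Ps.card:ℝ) - 1) :=
          (le_div_iff₀ hCbpos).mp hεle
        have hsb := abs_le.mp (hsumw_bound Ps)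
        have hge := hxsQ.2 Ps hPs
        have hlow : σ * ε * ∑ e ∈ delta edge E Ps, w e ≥ -(ε * Cb) := by
          rcases hσ with rfl | rfl
          · simp only [one_mul]
            nlinarith [hεpos.le]
          · nlinarith [hεpos.le]
        rw [hsum]
        linarith
    · intro e he
      have hwe : w e = 0 := by
        by_contra h
        exact he (hFsub (hwsupp e h))
      simp only [hwe, mul_zero, add_zero]
      exact hxsZ e he
  set D : ℝ := ∑ e ∈ E, d e * w e with hD
  have hobjy : ∀ σ : ℝ, obj (fun e => xs e + σ * (ε * w e)) = m + σ * ε * D := by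
    intro σ
    show ∑ e ∈ E, d e * (xs e + σ * (ε * w e)) = m + σ * ε * D
    calc ∑ e ∈ E, d e * (xs e + σ * (ε * w e))
        = ∑ e ∈ E, (d e * xs e + σ * ε * (d e * w e)) :=
          Finset.sum_congr rfl fun e _ => by ring
      _ = ∑ e ∈ E, d e * xs e + σ * ε * ∑ e ∈ E, (d e * w e) := by
          rw [Finset.sum_add_distrib, Finset.mul_sum]
      _ = m + σ * ε * D := by rw [hmxs]
  rcases lt_trichotomy D 0 with hDlt | hDeq | hDgt
  · have hy := hmemQ0 1 (Or.inl rfl)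
    have hmy : m ≤ obj (fun e => xs e + 1 * (ε * w e)) := hminQ _ hy.1
    rw [hobjy 1] at hmy
    nlinarith
  · have hy := hmemQ0 1 (Or.inl rfl)
    have hz := hmemQ0 (-1) (Or.inr rfl)
    have hyO : (fun e => xs e + 1 * (ε * w e)) ∈ O :=
      ⟨hy, by rw [Set.mem_setOf_eq, hobjy 1, hDeq]; ring⟩
    have hzO : (fun e => xs e + (-1) * (ε * w e)) ∈ O :=
      ⟨hz, by rw [Set.mem_setOf_eq, hobjy (-1), hDeq]; ring⟩
    have hmid : ∀ e, xs e = ((fun e => xs e + 1 * (ε * w e)) e +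
        (fun e => xs e + (-1) * (ε * w e)) e) / 2 := fun e => by
      simp only []
      ring
    have hfix := hxsext _ hyO _ hzO hmid estar (Finset.mem_toList.mpr (hFsub hestar))
    have hzero : ε * w estar = 0 := by linarith
    rcases mul_eq_zero.mp hzero with h | h
    · exact hεpos.ne' h
    · exact hwestar h
  · have hz := hmemQ0 (-1) (Or.inr rfl)
    have hmz : m ≤ obj (fun e => xs e + (-1) * (ε * w e)) := hminQ _ hz.1
    rw [hobjy (-1)] at hmz
    nlinarith
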